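/- Let f be an interval exchange transformation of I = [p,q) that is not the identity. Then there exists ε_0 > 0 such that for every 0 < ε < ε_0 there exist interval swap maps g_1, g_2 with the property that g_2 f^{-1} g_1 f g_1 g_2 is an interval swap map of type ε. -/

import Mathlib

open scoped TensorProduct

/-- An interval exchange transformation of the half-open interval `[p, q)`:
a bijection of `[p, q)` onto itself, extended by the identity outside,
which is a translation on each piece of a finite partition of `[p, q)`
into half-open intervals. -/
def IsIET (p q : ℝ) (f : ℝ → ℝ) : Prop :=
  Set.BijOn f (Set.Ico p q) (Set.Ico p q) ∧
  (∀ x, x ∉ Set.Ico p q → f x = x) ∧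
  ∃ (n : ℕ) (pt : Fin (n + 1) → ℝ),
    StrictMono pt ∧ pt 0 = p ∧ pt (Fin.last n) = q ∧
    ∀ i : Fin n, ∃ t : ℝ,
      ∀ x ∈ Set.Ico (pt i.castSucc) (pt i.succ), f x = x + t

/-- A restricted rotation of type `(a, b)` on `[p, q)`: it exchanges two
adjacent half-open intervals of lengths `a` (on the left) and `b` (on the
right) by translation, fixing the rest of the line. -/
def IsRestrictedRotation (p q a b : ℝ) (f : ℝ → ℝ) : Prop :=
  0 < a ∧ 0 < b ∧ ∃ x : ℝ, p ≤ x ∧ x + a + b ≤ q ∧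
    (∀ y ∈ Set.Ico x (x + a), f y = y + b) ∧
    (∀ y ∈ Set.Ico (x + a) (x + a + b), f y = y - a) ∧
    (∀ y, y ∉ Set.Ico x (x + a + b) → f y = y)

/-- An interval swap map of type `a` on `[p, q)`: it interchanges two
disjoint half-open intervals of length `a` by translation, fixing the
rest of the line. -/
def IsIntervalSwap (p q a : ℝ) (f : ℝ → ℝ) : Prop :=
  0 < a ∧ ∃ x y : ℝ, p ≤ x ∧ x + a ≤ y ∧ y + a ≤ q ∧
    (∀ z ∈ Set.Ico x (x + a), f z = z + (y - x)) ∧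
    (∀ z ∈ Set.Ico y (y + a), f z = z - (y - x)) ∧
    (∀ z, z ∉ Set.Ico x (x + a) ∪ Set.Ico y (y + a) → f z = z)

/-- `f` is a finite product (composition) of interval swap maps on `[p, q)`. -/
def IsSwapProduct (p q : ℝ) (f : ℝ → ℝ) : Prop :=
  ∃ L : List (ℝ → ℝ), (∀ g ∈ L, ∃ a, IsIntervalSwap p q a g) ∧
    f = L.foldr (· ∘ ·) id

/-- `ξ ∈ ℝ ⊗[ℚ] ℝ` is the SAF sum of `f` computed from some partition of
`[p, q)` into half-open intervals on each of which `f` is a translation. -/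
def HasSAF (p q : ℝ) (f : ℝ → ℝ) (ξ : ℝ ⊗[ℚ] ℝ) : Prop :=
  ∃ (n : ℕ) (pt : Fin (n + 1) → ℝ) (t : Fin n → ℝ),
    StrictMono pt ∧ pt 0 = p ∧ pt (Fin.last n) = q ∧
    (∀ i : Fin n, ∀ x ∈ Set.Ico (pt i.castSucc) (pt i.succ), f x = x + t i) ∧
    ξ = ∑ i : Fin n, (pt i.succ - pt i.castSucc) ⊗ₜ[ℚ] t i

/-- The interval swap map exchanging `[x, x+a)` and `[y, y+a)`. -/
noncomputable def swapFun (x y a z : ℝ) : ℝ :=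
  if x ≤ z ∧ z < x + a then z + (y - x)
  else if y ≤ z ∧ z < y + a then z - (y - x) else z

theorem swapFun_lo {x y a z : ℝ} (h1 : x ≤ z) (h2 : z < x + a) :
    swapFun x y a z = z + (y - x) := if_pos ⟨h1, h2⟩

theorem swapFun_hi {x y a z : ℝ} (hxy : x + a ≤ y) (h1 : y ≤ z) (h2 : z < y + a) :
    swapFun x y a z = z - (y - x) := by
  unfold swapFun
  rw [if_neg (by rintro ⟨-, h⟩; linarith), if_pos ⟨h1, h2⟩]

theorem swapFun_off {x y a z : ℝ} (h1 : ¬(x ≤ z ∧ z < x + a)) (h2 : ¬(y ≤ z ∧ z < y + a)) :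
    swapFun x y a z = z := by
  unfold swapFun
  rw [if_neg h1, if_neg h2]

theorem isSwap_swapFun {p q x y a : ℝ} (ha : 0 < a) (hpx : p ≤ x) (hxy : x + a ≤ y)
    (hyq : y + a ≤ q) : IsIntervalSwap p q a (swapFun x y a) := by
  refine ⟨ha, x, y, hpx, hxy, hyq, ?_, ?_, ?_⟩
  · intro z hz
    exact swapFun_lo hz.1 hz.2
  · intro z hz
    exact swapFun_hi hxy hz.1 hz.2
  · intro z hz
    simp only [Set.mem_union, Set.mem_Ico, not_or, not_and, not_lt] at hz
    refine swapFun_off ?_ ?_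
    · rintro ⟨h, h'⟩; exact absurd (hz.1 h) (not_le.2 h')
    · rintro ⟨h, h'⟩; exact absurd (hz.2 h) (not_le.2 h')

theorem keyC {L R c : ℝ} (hc : 0 < c) (hLR : L + 2 * c ≤ R) (z : ℝ) :
    swapFun L (R + c) c (swapFun L (L + c) c (swapFun R (R + c) c (swapFun L (R + c) c z)))
      = swapFun L R (2 * c) z := by
  by_cases c1 : L ≤ z ∧ z < L + c
  · obtain ⟨a1, a2⟩ := c1
    have e1 : swapFun L (R + c) c z = z + (R + c - L) :=
      swapFun_lo (by linarith) (by linarith)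
    have e2 : swapFun R (R + c) c (z + (R + c - L)) = z + (R + c - L) - (R + c - R) :=
      swapFun_hi (by linarith) (by linarith) (by linarith)
    have e3 : swapFun L (L + c) c (z + (R + c - L) - (R + c - R))
        = z + (R + c - L) - (R + c - R) :=
      swapFun_off (by rintro ⟨h, h'⟩; linarith) (by rintro ⟨h, h'⟩; linarith)
    have e4 : swapFun L (R + c) c (z + (R + c - L) - (R + c - R))
        = z + (R + c - L) - (R + c - R) :=
      swapFun_off (by rintro ⟨h, h'⟩; linarith) (by rintro ⟨h, h'⟩; linarith)
    have e5 : swapFun L R (2 * c) z = z + (R - L) :=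
      swapFun_lo (by linarith) (by linarith)
    rw [e1, e2, e3, e4, e5]; ring
  · by_cases c2 : L + c ≤ z ∧ z < L + 2 * c
    · obtain ⟨a1, a2⟩ := c2
      have e1 : swapFun L (R + c) c z = z :=
        swapFun_off (by rintro ⟨h, h'⟩; linarith) (by rintro ⟨h, h'⟩; linarith)
      have e2 : swapFun R (R + c) c z = z :=
        swapFun_off (by rintro ⟨h, h'⟩; linarith) (by rintro ⟨h, h'⟩; linarith)
      have e3 : swapFun L (L + c) c z = z - (L + c - L) :=
        swapFun_hi (by linarith) (by linarith) (by linarith)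
      have e4 : swapFun L (R + c) c (z - (L + c - L)) = z - (L + c - L) + (R + c - L) :=
        swapFun_lo (by linarith) (by linarith)
      have e5 : swapFun L R (2 * c) z = z + (R - L) :=
        swapFun_lo (by linarith) (by linarith)
      rw [e1, e2, e3, e4, e5]; ring
    · by_cases c3 : R ≤ z ∧ z < R + c
      · obtain ⟨a1, a2⟩ := c3
        have e1 : swapFun L (R + c) c z = z :=
          swapFun_off (by rintro ⟨h, h'⟩; linarith) (by rintro ⟨h, h'⟩; linarith)
        have e2 : swapFun R (R + c) c z = z + (R + c - R) :=
          swapFun_lo (by linarith) (by linarith)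
        have e3 : swapFun L (L + c) c (z + (R + c - R)) = z + (R + c - R) :=
          swapFun_off (by rintro ⟨h, h'⟩; linarith) (by rintro ⟨h, h'⟩; linarith)
        have e4 : swapFun L (R + c) c (z + (R + c - R))
            = z + (R + c - R) - (R + c - L) :=
          swapFun_hi (by linarith) (by linarith) (by linarith)
        have e5 : swapFun L R (2 * c) z = z - (R - L) :=
          swapFun_hi (by linarith) (by linarith) (by linarith)
        rw [e1, e2, e3, e4, e5]; ring
      · by_cases c4 : R + c ≤ z ∧ z < R + 2 * c
        · obtain ⟨a1, a2⟩ := c4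
          have e1 : swapFun L (R + c) c z = z - (R + c - L) :=
            swapFun_hi (by linarith) (by linarith) (by linarith)
          have e2 : swapFun R (R + c) c (z - (R + c - L)) = z - (R + c - L) :=
            swapFun_off (by rintro ⟨h, h'⟩; linarith) (by rintro ⟨h, h'⟩; linarith)
          have e3 : swapFun L (L + c) c (z - (R + c - L))
              = z - (R + c - L) + (L + c - L) :=
            swapFun_lo (by linarith) (by linarith)
          have e4 : swapFun L (R + c) c (z - (R + c - L) + (L + c - L))
              = z - (R + c - L) + (L + c - L) :=
            swapFun_off (by rintro ⟨h, h'⟩; linarith) (by rintro ⟨h, h'⟩; linarith)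
          have e5 : swapFun L R (2 * c) z = z - (R - L) :=
            swapFun_hi (by linarith) (by linarith) (by linarith)
          rw [e1, e2, e3, e4, e5]; ring
        · have e1 : swapFun L (R + c) c z = z :=
            swapFun_off (by rintro ⟨h, h'⟩; exact c1 ⟨h, by linarith⟩)
              (by rintro ⟨h, h'⟩; exact c4 ⟨h, by linarith⟩)
          have e2 : swapFun R (R + c) c z = z :=
            swapFun_off (by rintro ⟨h, h'⟩; exact c3 ⟨h, by linarith⟩)
              (by rintro ⟨h, h'⟩; exact c4 ⟨h, by linarith⟩)
          have e3 : swapFun L (L + c) c z = z :=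
            swapFun_off (by rintro ⟨h, h'⟩; exact c1 ⟨h, by linarith⟩)
              (by rintro ⟨h, h'⟩; exact c2 ⟨h, by linarith⟩)
          have e5 : swapFun L R (2 * c) z = z := by
            refine swapFun_off ?_ ?_
            · rintro ⟨h, h'⟩
              rcases lt_or_ge z (L + c) with hh | hh
              · exact c1 ⟨h, hh⟩
              · exact c2 ⟨hh, h'⟩
            · rintro ⟨h, h'⟩
              rcases lt_or_ge z (R + c) with hh | hh
              · exact c3 ⟨h, hh⟩
              · exact c4 ⟨hh, h'⟩
          rw [e1, e2, e3, e1, e5]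

theorem keyC2 {L R c : ℝ} (hc : 0 < c) (hLR : L + 2 * c ≤ R) (z : ℝ) :
    swapFun L (R + c) c (swapFun R (R + c) c (swapFun L (L + c) c (swapFun L (R + c) c z)))
      = swapFun L R (2 * c) z := by
  by_cases c1 : L ≤ z ∧ z < L + c
  · obtain ⟨a1, a2⟩ := c1
    have e1 : swapFun L (R + c) c z = z + (R + c - L) :=
      swapFun_lo (by linarith) (by linarith)
    have e2 : swapFun L (L + c) c (z + (R + c - L)) = z + (R + c - L) :=
      swapFun_off (by rintro ⟨h, h'⟩; linarith) (by rintro ⟨h, h'⟩; linarith)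
    have e3 : swapFun R (R + c) c (z + (R + c - L)) = z + (R + c - L) - (R + c - R) :=
      swapFun_hi (by linarith) (by linarith) (by linarith)
    have e4 : swapFun L (R + c) c (z + (R + c - L) - (R + c - R))
        = z + (R + c - L) - (R + c - R) :=
      swapFun_off (by rintro ⟨h, h'⟩; linarith) (by rintro ⟨h, h'⟩; linarith)
    have e5 : swapFun L R (2 * c) z = z + (R - L) :=
      swapFun_lo (by linarith) (by linarith)
    rw [e1, e2, e3, e4, e5]; ring
  · by_cases c2 : L + c ≤ z ∧ z < L + 2 * c
    · obtain ⟨a1, a2⟩ := c2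
      have e1 : swapFun L (R + c) c z = z :=
        swapFun_off (by rintro ⟨h, h'⟩; linarith) (by rintro ⟨h, h'⟩; linarith)
      have e2 : swapFun L (L + c) c z = z - (L + c - L) :=
        swapFun_hi (by linarith) (by linarith) (by linarith)
      have e3 : swapFun R (R + c) c (z - (L + c - L)) = z - (L + c - L) :=
        swapFun_off (by rintro ⟨h, h'⟩; linarith) (by rintro ⟨h, h'⟩; linarith)
      have e4 : swapFun L (R + c) c (z - (L + c - L)) = z - (L + c - L) + (R + c - L) :=
        swapFun_lo (by linarith) (by linarith)
      have e5 : swapFun L R (2 * c) z = z + (R - L) :=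
        swapFun_lo (by linarith) (by linarith)
      rw [e1, e2, e3, e4, e5]; ring
    · by_cases c3 : R ≤ z ∧ z < R + c
      · obtain ⟨a1, a2⟩ := c3
        have e1 : swapFun L (R + c) c z = z :=
          swapFun_off (by rintro ⟨h, h'⟩; linarith) (by rintro ⟨h, h'⟩; linarith)
        have e2 : swapFun L (L + c) c z = z :=
          swapFun_off (by rintro ⟨h, h'⟩; linarith) (by rintro ⟨h, h'⟩; linarith)
        have e3 : swapFun R (R + c) c z = z + (R + c - R) :=
          swapFun_lo (by linarith) (by linarith)
        have e4 : swapFun L (R + c) c (z + (R + c - R))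
            = z + (R + c - R) - (R + c - L) :=
          swapFun_hi (by linarith) (by linarith) (by linarith)
        have e5 : swapFun L R (2 * c) z = z - (R - L) :=
          swapFun_hi (by linarith) (by linarith) (by linarith)
        rw [e1, e2, e3, e4, e5]; ring
      · by_cases c4 : R + c ≤ z ∧ z < R + 2 * c
        · obtain ⟨a1, a2⟩ := c4
          have e1 : swapFun L (R + c) c z = z - (R + c - L) :=
            swapFun_hi (by linarith) (by linarith) (by linarith)
          have e2 : swapFun L (L + c) c (z - (R + c - L))
              = z - (R + c - L) + (L + c - L) :=
            swapFun_lo (by linarith) (by linarith)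
          have e3 : swapFun R (R + c) c (z - (R + c - L) + (L + c - L))
              = z - (R + c - L) + (L + c - L) :=
            swapFun_off (by rintro ⟨h, h'⟩; linarith) (by rintro ⟨h, h'⟩; linarith)
          have e4 : swapFun L (R + c) c (z - (R + c - L) + (L + c - L))
              = z - (R + c - L) + (L + c - L) :=
            swapFun_off (by rintro ⟨h, h'⟩; linarith) (by rintro ⟨h, h'⟩; linarith)
          have e5 : swapFun L R (2 * c) z = z - (R - L) :=
            swapFun_hi (by linarith) (by linarith) (by linarith)
          rw [e1, e2, e3, e4, e5]; ring
        · have e1 : swapFun L (R + c) c z = z :=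
            swapFun_off (by rintro ⟨h, h'⟩; exact c1 ⟨h, by linarith⟩)
              (by rintro ⟨h, h'⟩; exact c4 ⟨h, by linarith⟩)
          have e2 : swapFun L (L + c) c z = z :=
            swapFun_off (by rintro ⟨h, h'⟩; exact c1 ⟨h, by linarith⟩)
              (by rintro ⟨h, h'⟩; exact c2 ⟨h, by linarith⟩)
          have e3 : swapFun R (R + c) c z = z :=
            swapFun_off (by rintro ⟨h, h'⟩; exact c3 ⟨h, by linarith⟩)
              (by rintro ⟨h, h'⟩; exact c4 ⟨h, by linarith⟩)
          have e5 : swapFun L R (2 * c) z = z := by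
            refine swapFun_off ?_ ?_
            · rintro ⟨h, h'⟩
              rcases lt_or_ge z (L + c) with hh | hh
              · exact c1 ⟨h, hh⟩
              · exact c2 ⟨hh, h'⟩
            · rintro ⟨h, h'⟩
              rcases lt_or_ge z (R + c) with hh | hh
              · exact c3 ⟨h, hh⟩
              · exact c4 ⟨hh, h'⟩
          rw [e1, e2, e3, e1, e5]

theorem conj_eval (f : ℝ → ℝ) (hinj : Function.Injective f)
    (u δ τ c : ℝ) (hc : 0 < c) (h2c : 2 * c ≤ δ)
    (hJ : ∀ z, u ≤ z → z < u + δ → f z = z + τ) (z : ℝ) :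
    Function.invFun f (swapFun (u + τ) (u + τ + c) c (f z)) = swapFun u (u + c) c z := by
  have hlinv : ∀ w, Function.invFun f (f w) = w := fun w =>
    Function.leftInverse_invFun hinj w
  by_cases h1 : u ≤ z ∧ z < u + c
  · obtain ⟨a1, a2⟩ := h1
    have hfz : f z = z + τ := hJ z a1 (by linarith)
    have e1 : swapFun (u + τ) (u + τ + c) c (f z) = f (z + c) := by
      rw [hfz, swapFun_lo (by linarith) (by linarith),
        hJ (z + c) (by linarith) (by linarith)]
      ring
    rw [e1, hlinv, swapFun_lo a1 (by linarith)]
    ring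
  · by_cases h2 : u + c ≤ z ∧ z < u + c + c
    · obtain ⟨a1, a2⟩ := h2
      have hfz : f z = z + τ := hJ z (by linarith) (by linarith)
      have e1 : swapFun (u + τ) (u + τ + c) c (f z) = f (z - c) := by
        rw [hfz, swapFun_hi (by linarith) (by linarith) (by linarith),
          hJ (z - c) (by linarith) (by linarith)]
        ring
      rw [e1, hlinv, swapFun_hi (le_refl (u + c)) a1 a2]
      ring
    · have hfz : ¬(u + τ ≤ f z ∧ f z < u + τ + 2 * c) := by
        rintro ⟨ha, hb⟩
        have hw : f (f z - τ) = f z := by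
          rw [hJ (f z - τ) (by linarith) (by linarith)]
          ring
        have hzz : f z - τ = z := hinj hw
        rcases lt_or_ge z (u + c) with hh | hh
        · exact h1 ⟨by linarith, hh⟩
        · exact h2 ⟨hh, by linarith⟩
      have e1 : swapFun (u + τ) (u + τ + c) c (f z) = f z :=
        swapFun_off (by rintro ⟨h, h'⟩; exact hfz ⟨h, by linarith⟩)
          (by rintro ⟨h, h'⟩; exact hfz ⟨by linarith, by linarith⟩)
      rw [e1, hlinv, swapFun_off h1 h2]

theorem exists_piece {n : ℕ} {pt : Fin (n + 1) → ℝ}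
    {x : ℝ} (hx1 : pt 0 ≤ x) (hx2 : x < pt (Fin.last n)) :
    ∃ i : Fin n, pt i.castSucc ≤ x ∧ x < pt i.succ := by
  classical
  set F : Finset (Fin (n + 1)) := Finset.univ.filter fun j => pt j ≤ x with hF
  have h0F : (0 : Fin (n + 1)) ∈ F := by
    simp [hF, hx1]
  have hFne : F.Nonempty := ⟨0, h0F⟩
  set j := F.max' hFne with hj
  have hjx : pt j ≤ x := by
    have := F.max'_mem hFne
    simpa [hF] using this
  have hjlt : j < Fin.last n := by
    rcases lt_or_eq_of_le (Fin.le_last j) with h | h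
    · exact h
    · exfalso; rw [h] at hjx; linarith
  have hjn : (j : ℕ) < n := by
    simpa [Fin.lt_iff_val_lt_val] using hjlt
  refine ⟨⟨(j : ℕ), hjn⟩, ?_, ?_⟩
  · have : (⟨(j : ℕ), hjn⟩ : Fin n).castSucc = j := by
      ext; simp
    rw [this]; exact hjx
  · by_contra hnot
    push_neg at hnot
    have hmem : (⟨(j : ℕ), hjn⟩ : Fin n).succ ∈ F := by
      have h' : pt ⟨(j : ℕ) + 1, by omega⟩ ≤ x := by
        exact hnot
      simp only [hF, Finset.mem_filter, Finset.mem_univ, true_and]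
      exact h'
    have hle := F.le_max' _ hmem
    rw [← hj] at hle
    have : (j : ℕ) + 1 ≤ (j : ℕ) := by
      simpa [Fin.le_iff_val_le_val] using hle
    omega

/-- For every nontrivial interval exchange transformation `f` there is
`ε₀ > 0` such that for every `0 < ε < ε₀` there exist interval swap maps
`g₁, g₂` with `g₂ ∘ f⁻¹ ∘ g₁ ∘ f ∘ g₁ ∘ g₂` an interval swap map of type `ε`. -/
theorem swap_from_nontrivial_iet (p q : ℝ) (f : ℝ → ℝ)
    (hf : IsIET p q f) (hne : f ≠ id) :
    ∃ ε₀ > 0, ∀ ε, 0 < ε → ε < ε₀ →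
      ∃ g₁ g₂ : ℝ → ℝ,
        (∃ c, IsIntervalSwap p q c g₁) ∧ (∃ c, IsIntervalSwap p q c g₂) ∧
        IsIntervalSwap p q ε (g₂ ∘ Function.invFun f ∘ g₁ ∘ f ∘ g₁ ∘ g₂) := by
  obtain ⟨hbij, hout, n, pt, hmono, hp0, hpl, hpieces⟩ := hf
  choose t ht using hpieces
  have hinj : Function.Injective f := by
    intro a b hab
    by_cases ha : a ∈ Set.Ico p q <;> by_cases hb : b ∈ Set.Ico p q
    · exact hbij.injOn ha hb hab
    · exfalso
      apply hb
      rw [← hout b hb, ← hab]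
      exact hbij.mapsTo ha
    · exfalso
      apply ha
      rw [← hout a ha, hab]
      exact hbij.mapsTo hb
    · rw [hout a ha, hout b hb] at hab
      exact hab
  have hex : ∃ i, t i ≠ 0 := by
    by_contra hcon
    push_neg at hcon
    apply hne
    funext x
    by_cases hx : x ∈ Set.Ico p q
    · have hx1 : pt 0 ≤ x := by rw [hp0]; exact hx.1
      have hx2 : x < pt (Fin.last n) := by rw [hpl]; exact hx.2
      obtain ⟨i, h1, h2⟩ := exists_piece hx1 hx2
      have hfx := ht i x ⟨h1, h2⟩
      rw [hcon i, add_zero] at hfx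
      simpa using hfx
    · simpa using hout x hx
  obtain ⟨i, hti⟩ := hex
  have pack : ∃ u δ τ : ℝ, 0 < δ ∧ τ ≠ 0 ∧ p ≤ u ∧ u + δ ≤ q ∧
      ∀ z, u ≤ z → z < u + δ → f z = z + τ := by
    refine ⟨pt i.castSucc, pt i.succ - pt i.castSucc, t i, ?_, hti, ?_, ?_, ?_⟩
    · linarith [hmono (Fin.castSucc_lt_succ (i := i))]
    · rw [← hp0]; exact hmono.monotone (Fin.zero_le _)
    · have h := hmono.monotone (Fin.le_last i.succ)
      rw [hpl] at h
      linarith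
    · intro z h1 h2
      exact ht i z ⟨h1, by linarith⟩
  obtain ⟨u, δ, τ, hδ, hτ0, hpu, huq, hJ⟩ := pack
  have himg : ∀ z, u ≤ z → z < u + δ → p ≤ z + τ ∧ z + τ < q := by
    intro z h1 h2
    have hz : z ∈ Set.Ico p q := ⟨le_trans hpu h1, lt_of_lt_of_le h2 huq⟩
    have hm := hbij.mapsTo hz
    rw [hJ z h1 h2] at hm
    exact ⟨hm.1, hm.2⟩
  have hpτ : p ≤ u + τ := (himg u le_rfl (by linarith)).1
  have hτq : u + τ + δ ≤ q := by
    by_contra hcon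
    push_neg at hcon
    have h1 : max u (q - τ) < u + δ := max_lt (by linarith) (by linarith)
    have h2 := (himg _ (le_max_left _ _) h1).2
    have h3 := le_max_right u (q - τ)
    linarith
  refine ⟨min δ |τ|, lt_min hδ (abs_pos.2 hτ0), ?_⟩
  intro ε hε hεlt
  have hεδ : ε < δ := lt_of_lt_of_le hεlt (min_le_left _ _)
  have hετ : ε < |τ| := lt_of_lt_of_le hεlt (min_le_right _ _)
  set c := ε / 2 with hcdef
  have hc : 0 < c := by rw [hcdef]; linarith
  have hcε : 2 * c = ε := by rw [hcdef]; ring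
  have pack2 : ∃ L R : ℝ, ((L = u ∧ R = u + τ) ∨ (L = u + τ ∧ R = u)) ∧
      R - L = |τ| ∧ p ≤ L ∧ R + ε ≤ q := by
    rcases le_or_gt 0 τ with h | h
    · exact ⟨u, u + τ, Or.inl ⟨rfl, rfl⟩, by rw [abs_of_nonneg h]; ring, hpu,
        by linarith⟩
    · exact ⟨u + τ, u, Or.inr ⟨rfl, rfl⟩, by rw [abs_of_neg h]; ring, hpτ,
        by linarith⟩
  obtain ⟨L, R, hcase, hRL, hpL, hRq⟩ := pack2
  have hLltR : L + ε ≤ R := by linarith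
  refine ⟨swapFun (u + τ) (u + τ + c) c, swapFun L (R + c) c,
    ⟨c, isSwap_swapFun hc hpτ (by linarith) (by linarith)⟩,
    ⟨c, isSwap_swapFun hc hpL (by linarith) (by linarith)⟩, ?_⟩
  have hkey : ∀ z, (swapFun L (R + c) c ∘ Function.invFun f ∘
      swapFun (u + τ) (u + τ + c) c ∘ f ∘
      swapFun (u + τ) (u + τ + c) c ∘ swapFun L (R + c) c) z
      = swapFun L R ε z := by
    intro z
    simp only [Function.comp_apply]
    rw [conj_eval f hinj u δ τ c hc (by linarith) hJ]
    rcases hcase with ⟨h1, h2⟩ | ⟨h1, h2⟩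
    · rw [show u + τ = R from h2.symm, show u = L from h1.symm,
        show ε = 2 * c from by ring]
      exact keyC hc (by linarith) z
    · rw [show u + τ = L from h1.symm, show u = R from h2.symm,
        show ε = 2 * c from by ring]
      exact keyC2 hc (by linarith) z
  refine ⟨hε, L, R, hpL, hLltR, hRq, ?_, ?_, ?_⟩
  · intro z hz
    rw [hkey z]
    exact swapFun_lo hz.1 hz.2
  · intro z hz
    rw [hkey z]
    exact swapFun_hi hLltR hz.1 hz.2
  · intro z hz
    simp only [Set.mem_union, Set.mem_Ico, not_or, not_and, not_lt] at hz
    rw [hkey z]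
    refine swapFun_off ?_ ?_
    · rintro ⟨h, h'⟩; exact absurd (hz.1 h) (not_le.2 h')
    · rintro ⟨h, h'⟩; exact absurd (hz.2 h) (not_le.2 h')
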